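/- For real Laurent polynomials F, G of degree at most 1 satisfying F(w)F(1/w) + G(w)G(1/w) = 1 on U(1) with F, G of equal (odd) parity, define θ_sum := arg(F(1) + iG(1)) and θ_diff := arg(F(i) - iG(i)) - π/2, and φ₀ := (θ_sum + θ_diff)/2, φ₁ := (θ_sum - θ_diff)/2. Then S_x(φ₀) W_z(θ) S_x(φ₁) = [[F(w), iG(w)], [iG(1/w), F(1/w)]] for all w = e^{iθ} ∈ U(1). -/

import Mathlib

open Complex Matrix

private lemma wz_key (c0 s0 c1 s1 fm fp gm gp : ℝ) (w : ℂ)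
    (h1 : c0 * c1 = fp) (h2 : s0 * s1 = -fm)
    (h3 : c0 * s1 = gp) (h4 : s0 * c1 = gm) :
    !![(c0 : ℂ), I * s0; I * s0, (c0 : ℂ)] * !![w, 0; 0, w⁻¹] *
      !![(c1 : ℂ), I * s1; I * s1, (c1 : ℂ)] =
    !![(fm : ℂ) * w⁻¹ + (fp : ℂ) * w, I * ((gm : ℂ) * w⁻¹ + (gp : ℂ) * w);
       I * ((gm : ℂ) * w + (gp : ℂ) * w⁻¹), (fm : ℂ) * w + (fp : ℂ) * w⁻¹] := by
  have hc1 : (c0 : ℂ) * c1 = fp := by exact_mod_cast h1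
  have hc2 : (s0 : ℂ) * s1 = -fm := by exact_mod_cast h2
  have hc3 : (c0 : ℂ) * s1 = gp := by exact_mod_cast h3
  have hc4 : (s0 : ℂ) * c1 = gm := by exact_mod_cast h4
  ext i j
  fin_cases i <;> fin_cases j <;>
    simp [Matrix.mul_apply, Fin.sum_univ_two]
  · linear_combination w * hc1 + w⁻¹ * ((s0 : ℂ) * s1) * Complex.I_sq - w⁻¹ * hc2
  · linear_combination I * w * hc3 + I * w⁻¹ * hc4
  · linear_combination I * w * hc4 + I * w⁻¹ * hc3
  · linear_combination w * ((s0 : ℂ) * s1) * Complex.I_sq - w * hc2 + w⁻¹ * hc1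

theorem wz_qsp_degree_one (fm fp gm gp : ℝ)
    (F : ℂ → ℂ) (G : ℂ → ℂ)
    (hF : ∀ w : ℂ, F w = (fm : ℂ) * w⁻¹ + (fp : ℂ) * w)
    (hG : ∀ w : ℂ, G w = (gm : ℂ) * w⁻¹ + (gp : ℂ) * w)
    (hid : ∀ w : ℂ, ‖w‖ = 1 → F w * F w⁻¹ + G w * G w⁻¹ = 1) :
    letI θsum : ℝ := Complex.arg (F 1 + I * G 1)
    letI θdiff : ℝ := Complex.arg (F I - I * G I) - Real.pi / 2
    letI φ₀ : ℝ := (θsum + θdiff) / 2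
    letI φ₁ : ℝ := (θsum - θdiff) / 2
    ∀ θ : ℝ,
      letI w : ℂ := Complex.exp (I * θ)
      !![(Real.cos φ₀ : ℂ), I * Real.sin φ₀; I * Real.sin φ₀, (Real.cos φ₀ : ℂ)] *
        !![w, 0; 0, w⁻¹] *
        !![(Real.cos φ₁ : ℂ), I * Real.sin φ₁; I * Real.sin φ₁, (Real.cos φ₁ : ℂ)] =
      !![F w, I * G w; I * G w⁻¹, F w⁻¹] := by
  intro θ
  -- notation
  set θsum : ℝ := Complex.arg (F 1 + I * G 1) with hθs
  set θdiff : ℝ := Complex.arg (F I - I * G I) - Real.pi / 2 with hθd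
  set φ₀ : ℝ := (θsum + θdiff) / 2 with hφ₀
  set φ₁ : ℝ := (θsum - θdiff) / 2 with hφ₁
  -- values at 1
  have hz1 : F 1 + I * G 1 = ((fm + fp : ℝ) : ℂ) + ((gm + gp : ℝ) : ℂ) * I := by
    rw [hF 1, hG 1, inv_one]; push_cast; ring
  have e1 : (fm + fp) ^ 2 + (gm + gp) ^ 2 = 1 := by
    have h := hid 1 (by simp)
    simp only [hF, hG, inv_one, mul_one] at h
    have h' : (((fm + fp) ^ 2 + (gm + gp) ^ 2 : ℝ) : ℂ) = 1 := by
      push_cast; linear_combination h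
    exact_mod_cast h'
  have habs1 : ‖F 1 + I * G 1‖ = 1 := by
    rw [hz1, Complex.norm_add_mul_I, e1, Real.sqrt_one]
  have hne1 : F 1 + I * G 1 ≠ 0 := by
    intro h; rw [h] at habs1; simp at habs1
  have hcs : Real.cos θsum = fm + fp := by
    rw [hθs, Complex.cos_arg hne1, habs1, div_one, hz1]; simp
  have hss : Real.sin θsum = gm + gp := by
    rw [hθs, Complex.sin_arg, habs1, div_one, hz1]; simp
  -- values at I
  have hz2 : F I - I * G I = ((gp - gm : ℝ) : ℂ) + ((fp - fm : ℝ) : ℂ) * I := by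
    rw [hF I, hG I, inv_I]; push_cast
    linear_combination ((gm : ℂ) - gp) * Complex.I_sq
  have e2 : (gp - gm) ^ 2 + (fp - fm) ^ 2 = 1 := by
    have h := hid I (by simp)
    simp only [hF, hG, inv_I, inv_neg, inv_inv, neg_neg] at h
    have h' : (((gp - gm) ^ 2 + (fp - fm) ^ 2 : ℝ) : ℂ) = 1 := by
      push_cast
      linear_combination h + (((fp : ℂ) - fm) ^ 2 + ((gp : ℂ) - gm) ^ 2) * Complex.I_sq
    exact_mod_cast h'
  have habs2 : ‖F I - I * G I‖ = 1 := by
    rw [hz2, Complex.norm_add_mul_I, e2, Real.sqrt_one]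
  have hne2 : F I - I * G I ≠ 0 := by
    intro h; rw [h] at habs2; simp at habs2
  have hcd : Real.cos θdiff = fp - fm := by
    rw [hθd, Real.cos_sub, Real.cos_pi_div_two, Real.sin_pi_div_two, mul_zero, mul_one,
      zero_add, Complex.sin_arg, habs2, div_one, hz2]
    simp
  have hsd : Real.sin θdiff = gm - gp := by
    rw [hθd, Real.sin_sub, Real.cos_pi_div_two, Real.sin_pi_div_two, mul_zero, mul_one,
      zero_sub, Complex.cos_arg hne2, habs2, div_one, hz2]
    simp
  -- angle sums
  have hsum : φ₀ + φ₁ = θsum := by rw [hφ₀, hφ₁]; ring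
  have hdiff : φ₀ - φ₁ = θdiff := by rw [hφ₀, hφ₁]; ring
  have hca : Real.cos θsum = Real.cos φ₀ * Real.cos φ₁ - Real.sin φ₀ * Real.sin φ₁ := by
    rw [← hsum, Real.cos_add]
  have hcb : Real.cos θdiff = Real.cos φ₀ * Real.cos φ₁ + Real.sin φ₀ * Real.sin φ₁ := by
    rw [← hdiff, Real.cos_sub]
  have hsa : Real.sin θsum = Real.sin φ₀ * Real.cos φ₁ + Real.cos φ₀ * Real.sin φ₁ := by
    rw [← hsum, Real.sin_add]
  have hsb : Real.sin θdiff = Real.sin φ₀ * Real.cos φ₁ - Real.cos φ₀ * Real.sin φ₁ := by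
    rw [← hdiff, Real.sin_sub]
  have h1 : Real.cos φ₀ * Real.cos φ₁ = fp := by
    rw [hcs] at hca; rw [hcd] at hcb; linarith
  have h2 : Real.sin φ₀ * Real.sin φ₁ = -fm := by
    rw [hcs] at hca; rw [hcd] at hcb; linarith
  have h3 : Real.cos φ₀ * Real.sin φ₁ = gp := by
    rw [hss] at hsa; rw [hsd] at hsb; linarith
  have h4 : Real.sin φ₀ * Real.cos φ₁ = gm := by
    rw [hss] at hsa; rw [hsd] at hsb; linarith
  -- conclude
  have key := wz_key (Real.cos φ₀) (Real.sin φ₀) (Real.cos φ₁) (Real.sin φ₁)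
    fm fp gm gp (Complex.exp (I * θ)) h1 h2 h3 h4
  have hFw : F (Complex.exp (I * θ))⁻¹ =
      (fm : ℂ) * Complex.exp (I * θ) + (fp : ℂ) * (Complex.exp (I * θ))⁻¹ := by
    rw [hF, inv_inv]
  have hGw : G (Complex.exp (I * θ))⁻¹ =
      (gm : ℂ) * Complex.exp (I * θ) + (gp : ℂ) * (Complex.exp (I * θ))⁻¹ := by
    rw [hG, inv_inv]
  rw [← hF (Complex.exp (I * θ)), ← hG (Complex.exp (I * θ)), ← hFw, ← hGw] at key
  exact key
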